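/- Let (E_k(t))_{k≥1} be real-valued, differentiable in t, with E_k(0) ≤ 0 for all k, E_k(t) → 0 uniformly on compact time intervals as k → ∞, ∂_t E_1 ≤ −E_1 + E_2, and ∂_t E_k ≤ (k−1)(E_{k−1} − E_k) + k(E_{k+1} − E_k) for k ≥ 2. Then E_k(t) ≤ 0 for all k ≥ 1 and t ≥ 0. -/

import Mathlib

open Set Filter Topology

theorem stmt_17 (E : ℕ → ℝ → ℝ)
    (hdiff : ∀ k ≥ 1, Differentiable ℝ (E k))
    (hE0 : ∀ k ≥ 1, E k 0 ≤ 0)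
    (hunif : ∀ T > (0:ℝ), TendstoUniformlyOn (fun k t => E k t) (fun _ => 0)
      Filter.atTop (Set.Icc 0 T))
    (h1 : ∀ t ≥ (0:ℝ), deriv (E 1) t ≤ -E 1 t + E 2 t)
    (hk : ∀ k : ℕ, 2 ≤ k → ∀ t ≥ (0:ℝ),
      deriv (E k) t ≤ ((k : ℝ) - 1) * (E (k - 1) t - E k t) + (k : ℝ) * (E (k + 1) t - E k t)) :
    ∀ k ≥ 1, ∀ t ≥ (0:ℝ), E k t ≤ 0 := by
  have main : ∀ ε > (0:ℝ), ∀ T > (0:ℝ), ∀ k, 1 ≤ k → ∀ t ∈ Set.Icc (0:ℝ) T,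
      E k t ≤ ε * (1 + T) := by
    intro ε hε T hT
    obtain ⟨N0, hN0⟩ : ∃ N, ∀ k, N ≤ k → ∀ t ∈ Set.Icc (0:ℝ) T, E k t < ε := by
      have h := (Metric.tendstoUniformlyOn_iff.mp (hunif T hT)) ε hε
      rw [Filter.eventually_atTop] at h
      obtain ⟨N, hN⟩ := h
      refine ⟨N, fun k hkN t ht => ?_⟩
      have h2 := hN k hkN t ht
      have habs : |E k t| < ε := by
        simpa [Real.dist_eq, abs_sub_comm] using h2
      exact lt_of_le_of_lt (le_abs_self _) habs
    set N := max N0 2 with hNdef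
    have hN2 : 2 ≤ N := le_max_right _ _
    set F : ℕ → ℝ → ℝ := fun k t => E k t - ε * (1 + t) with hFdef
    have hFeq : ∀ k t, F k t = E k t - ε * (1 + t) := fun _ _ => rfl
    have htail : ∀ k, N ≤ k → ∀ t ∈ Set.Icc (0:ℝ) T, F k t < 0 := by
      intro k hkN t ht
      have hlt : E k t < ε := hN0 k (le_trans (le_max_left _ _) hkN) t ht
      have hmo : ε ≤ ε * (1 + t) := by nlinarith [ht.1]
      rw [hFeq]; linarith
    have contF : ∀ k, 1 ≤ k → Continuous (F k) := by
      intro k hk1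
      exact ((hdiff k hk1).continuous).sub (by continuity)
    have key : ∀ t ∈ Set.Icc (0:ℝ) T, ∀ k, 1 ≤ k → k ≤ N → F k t < 0 := by
      by_contra hcon
      push_neg at hcon
      set S : Set ℝ := ⋃ k ∈ Finset.Icc 1 N, (Set.Icc (0:ℝ) T ∩ F k ⁻¹' Set.Ici 0)
        with hSdef
      have hSne : S.Nonempty := by
        obtain ⟨t, ht, k, hk1, hkN, hFk⟩ := hcon
        exact ⟨t, Set.mem_biUnion (Finset.mem_Icc.mpr ⟨hk1, hkN⟩) ⟨ht, hFk⟩⟩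
      have hSclosed : IsClosed S := by
        refine Set.Finite.isClosed_biUnion (Finset.finite_toSet _) ?_
        intro k hkmem
        have hk1 : 1 ≤ k := (Finset.mem_Icc.mp hkmem).1
        exact isClosed_Icc.inter (isClosed_Ici.preimage (contF k hk1))
      have hSsub : S ⊆ Set.Icc 0 T := by
        intro t ht
        simp only [hSdef, Set.mem_iUnion] at ht
        obtain ⟨k, hkmem, ht1, ht2⟩ := ht
        exact ht1
      have hScompact : IsCompact S := isCompact_Icc.of_isClosed_subset hSclosed hSsub
      obtain ⟨t0, ht0S, ht0min⟩ := hScompact.exists_isMinOn hSne continuous_id.continuousOn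
      have ht0min' : ∀ t ∈ S, t0 ≤ t := fun t ht => ht0min ht
      have ht0Icc : t0 ∈ Set.Icc (0:ℝ) T := hSsub ht0S
      obtain ⟨j, hjmem, hjIcc, hjF⟩ : ∃ j, j ∈ Finset.Icc 1 N ∧ t0 ∈ Set.Icc (0:ℝ) T ∧
          0 ≤ F j t0 := by
        simp only [hSdef, Set.mem_iUnion] at ht0S
        obtain ⟨k, hkmem, ht1, ht2⟩ := ht0S
        exact ⟨k, hkmem, ht1, ht2⟩
      have hj1 : 1 ≤ j := (Finset.mem_Icc.mp hjmem).1
      have hjN : j ≤ N := (Finset.mem_Icc.mp hjmem).2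
      have ht0pos : 0 < t0 := by
        rcases lt_or_eq_of_le ht0Icc.1 with h | h
        · exact h
        · exfalso
          have hF0 : F j 0 ≤ -ε := by
            have := hE0 j hj1
            rw [hFeq]; linarith
          rw [← h] at hjF
          linarith
      have hA : ∀ t, 0 ≤ t → t < t0 → ∀ k, 1 ≤ k → k ≤ N → F k t < 0 := by
        intro t ht0 htlt k hk1 hkN
        by_contra hge
        push_neg at hge
        have htS : t ∈ S := Set.mem_biUnion (Finset.mem_Icc.mpr ⟨hk1, hkN⟩)
          ⟨⟨ht0, le_trans htlt.le ht0Icc.2⟩, hge⟩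
        exact absurd (ht0min' t htS) (not_le.mpr htlt)
      have hFle : ∀ k, 1 ≤ k → F k t0 ≤ 0 := by
        intro k hk1
        by_cases hkN : k ≤ N
        · have hlim : Filter.Tendsto (F k) (nhdsWithin t0 (Set.Iio t0)) (nhds (F k t0)) :=
            (contF k hk1).continuousWithinAt
          refine le_of_tendsto hlim ?_
          filter_upwards [Ioo_mem_nhdsLT_of_mem (Set.mem_Ioc.mpr ⟨ht0pos, le_refl t0⟩)]
            with t ht
          exact (hA t ht.1.le ht.2 k hk1 hkN).le
        · exact (htail k (le_of_not_ge hkN) t0 ht0Icc).le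
      have hFj0 : F j t0 = 0 := le_antisymm (hFle j hj1) hjF
      have hEj : E j t0 = ε * (1 + t0) := by
        have := hFj0; rw [hFeq] at this; linarith
      -- derivative of F j at t0 from the left is ≥ 0
      have hderF : HasDerivAt (F j) (deriv (E j) t0 - ε) t0 := by
        have hd1 : HasDerivAt (E j) (deriv (E j) t0) t0 := ((hdiff j hj1) t0).hasDerivAt
        have hd2 : HasDerivAt (fun t => ε * (1 + t)) (ε * 1) t0 :=
          ((hasDerivAt_id t0).const_add 1).const_mul ε
        have h := hd1.sub hd2; rw [mul_one] at h; exact h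
      have hslope : Filter.Tendsto (slope (F j) t0) (nhdsWithin t0 (Set.Iio t0))
          (nhds (deriv (E j) t0 - ε)) := by
        have h := hasDerivWithinAt_iff_tendsto_slope.mp
          (hderF.hasDerivWithinAt (s := Set.Iio t0))
        rwa [Set.diff_singleton_eq_self (by simp)] at h
      have hge : ε ≤ deriv (E j) t0 := by
        have h0 : (0:ℝ) ≤ deriv (E j) t0 - ε := by
          refine ge_of_tendsto hslope ?_
          filter_upwards [Ioo_mem_nhdsLT_of_mem (Set.mem_Ioc.mpr ⟨ht0pos, le_refl t0⟩)]
            with t ht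
          have hFt : F j t ≤ 0 := (hA t ht.1.le ht.2 j hj1 hjN).le
          have hslope_eq : slope (F j) t0 t = F j t / (t - t0) := by
            rw [slope_def_field, hFj0, sub_zero]
          rw [hslope_eq]
          exact div_nonneg_iff.mpr (Or.inr ⟨hFt, by linarith [ht.2]⟩)
        linarith
      -- contradiction using the differential inequalities
      rcases eq_or_lt_of_le hj1 with hj | hj2'
      · -- j = 1
        have hj' : j = 1 := hj.symm
        subst hj'
        have hineq := h1 t0 ht0Icc.1
        have hE2 : E 2 t0 ≤ ε * (1 + t0) := by
          have := hFle 2 (by norm_num); rw [hFeq] at this; linarith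
        linarith
      · -- j ≥ 2
        have hj2 : 2 ≤ j := hj2'
        have hineq := hk j hj2 t0 ht0Icc.1
        have hEm : E (j - 1) t0 ≤ ε * (1 + t0) := by
          have := hFle (j - 1) (by omega); rw [hFeq] at this; linarith
        have hEp : E (j + 1) t0 ≤ ε * (1 + t0) := by
          have := hFle (j + 1) (by omega); rw [hFeq] at this; linarith
        have hjR : (2:ℝ) ≤ (j:ℝ) := by exact_mod_cast hj2
        have ha : E (j - 1) t0 - E j t0 ≤ 0 := by rw [hEj]; linarith
        have hb : E (j + 1) t0 - E j t0 ≤ 0 := by rw [hEj]; linarith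
        have hm1 : ((j:ℝ) - 1) * (E (j - 1) t0 - E j t0) ≤ 0 :=
          mul_nonpos_iff.mpr (Or.inl ⟨by linarith, ha⟩)
        have hm2 : (j:ℝ) * (E (j + 1) t0 - E j t0) ≤ 0 :=
          mul_nonpos_iff.mpr (Or.inl ⟨by linarith, hb⟩)
        linarith
    -- conclude main from key and htail
    intro k hk1 t ht
    have hmono : ε * (1 + t) ≤ ε * (1 + T) :=
      mul_le_mul_of_nonneg_left (by linarith [ht.2]) hε.le
    by_cases hkN : k ≤ N
    · have := key t ht k hk1 hkN
      rw [hFeq] at this; linarith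
    · have := htail k (le_of_not_ge hkN) t ht
      rw [hFeq] at this; linarith
  -- final conclusion: let ε → 0
  intro k hk1 t ht
  by_contra hpos
  push_neg at hpos
  set T : ℝ := t + 1 with hTdef
  have hT : 0 < T := by positivity
  have h1T : (0:ℝ) < 1 + T := by positivity
  set ε : ℝ := E k t / (2 * (1 + T)) with hεdef
  have hε : 0 < ε := by positivity
  have hb := main ε hε T hT k hk1 t ⟨ht, by linarith⟩
  have heq : ε * (1 + T) = E k t / 2 := by
    rw [hεdef, div_mul_eq_mul_div, div_eq_div_iff (by positivity) (by norm_num)]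
    ring
  rw [heq] at hb
  linarith
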